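/- Let V ∈ F^{k×n} and let W be a generic k×n matrix (entries algebraically independent over the prime field). Suppose that for all A_1,...,A_ℓ ⊆ [n] such that 𝒢_{A_1,...,A_ℓ}[W] has full row rank ℓk, the matrix 𝒢_{A_1,...,A_ℓ}[V] also has full row rank ℓk. Then for all A_1,...,A_ℓ ⊆ [n], rank 𝒢_{A_1,...,A_ℓ}[V] = rank 𝒢_{A_1,...,A_ℓ}[W]. -/

import Mathlib

open Matrix

/-- The block matrix `𝒢_{A_1,…,A_ℓ}[V]`. -/
def Gmat {F : Type} [Field F] {k n ℓ : ℕ} (V : Matrix (Fin k) (Fin n) F)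
    (A : Fin ℓ → Finset (Fin n)) :
    Matrix (Fin ℓ × Fin k) (Fin k ⊕ (Σ i : Fin ℓ, {x // x ∈ A i})) F :=
  Matrix.of fun p c =>
    match c with
    | Sum.inl c => if p.2 = c then (1 : F) else 0
    | Sum.inr q => if p.1 = q.1 then V p.2 q.2.1 else 0

namespace GmatAux

open Submodule Module

variable {F : Type} [Field F] {k n ℓ : ℕ}

/-- The "identity" columns. -/
def eCol (ℓ k : ℕ) (F : Type) [Field F] (c : Fin k) : Fin ℓ × Fin k → F :=
  fun p => if p.2 = c then 1 else 0

/-- The columns coming from `V`. -/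
def wCol (V : Matrix (Fin k) (Fin n) F) (i : Fin ℓ) (x : Fin n) : Fin ℓ × Fin k → F :=
  fun p => if p.1 = i then V p.2 x else 0

/-- The set of columns of `Gmat V A`. -/
def colSet (V : Matrix (Fin k) (Fin n) F) (A : Fin ℓ → Finset (Fin n)) :
    Set (Fin ℓ × Fin k → F) :=
  Set.range (eCol ℓ k F) ∪ ⋃ i, wCol V i '' ↑(A i)

lemma range_transpose (V : Matrix (Fin k) (Fin n) F) (A : Fin ℓ → Finset (Fin n)) :
    Set.range (Gmat V A)ᵀ = colSet V A := by
  ext v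
  constructor
  · rintro ⟨c, rfl⟩
    cases c with
    | inl c => exact Or.inl ⟨c, rfl⟩
    | inr q =>
      refine Or.inr (Set.mem_iUnion.2 ⟨q.1, ⟨q.2.1, q.2.2, ?_⟩⟩)
      rfl
  · rintro (⟨c, rfl⟩ | hv)
    · exact ⟨Sum.inl c, rfl⟩
    · obtain ⟨i, hi⟩ := Set.mem_iUnion.1 hv
      obtain ⟨x, hx, rfl⟩ := hi
      exact ⟨Sum.inr ⟨i, ⟨x, hx⟩⟩, rfl⟩

lemma rank_eq (V : Matrix (Fin k) (Fin n) F) (A : Fin ℓ → Finset (Fin n)) :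
    (Gmat V A).rank = finrank F (span F (colSet V A)) := by
  rw [rank_eq_finrank_span_cols, ← range_transpose]
  rfl

lemma colSet_mono (V : Matrix (Fin k) (Fin n) F) {A B : Fin ℓ → Finset (Fin n)}
    (h : ∀ i, A i ⊆ B i) : colSet V A ⊆ colSet V B := by
  rintro v (hv | hv)
  · exact Or.inl hv
  · obtain ⟨i, hi⟩ := Set.mem_iUnion.1 hv
    obtain ⟨x, hx, rfl⟩ := hi
    exact Or.inr (Set.mem_iUnion.2 ⟨i, ⟨x, h i hx, rfl⟩⟩)

lemma rank_mono (V : Matrix (Fin k) (Fin n) F) {A B : Fin ℓ → Finset (Fin n)}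
    (h : ∀ i, A i ⊆ B i) : (Gmat V A).rank ≤ (Gmat V B).rank := by
  rw [rank_eq, rank_eq]
  exact Submodule.finrank_mono (span_mono (colSet_mono V h))

lemma colSet_update (V : Matrix (Fin k) (Fin n) F) (A : Fin ℓ → Finset (Fin n))
    (i : Fin ℓ) (x : Fin n) :
    colSet V (Function.update A i (insert x (A i))) = insert (wCol V i x) (colSet V A) := by
  unfold colSet
  ext v
  simp only [Set.mem_union, Set.mem_iUnion, Set.mem_image, Set.mem_insert_iff,
    Finset.coe_insert, Finset.mem_coe]
  constructor
  · rintro (hv | ⟨j, y, hy, rfl⟩)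
    · exact Or.inr (Or.inl hv)
    · by_cases hj : j = i
      · subst hj
        rw [Function.update_self] at hy
        rcases Finset.mem_insert.1 hy with rfl | hy
        · exact Or.inl rfl
        · exact Or.inr (Or.inr ⟨j, y, hy, rfl⟩)
      · rw [Function.update_of_ne hj] at hy
        exact Or.inr (Or.inr ⟨j, y, hy, rfl⟩)
  · rintro (rfl | hv | ⟨j, y, hy, rfl⟩)
    · refine Or.inr ⟨i, x, ?_, rfl⟩
      rw [Function.update_self]
      exact Finset.mem_insert_self _ _
    · exact Or.inl hv
    · by_cases hj : j = i
      · subst hj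
        refine Or.inr ⟨j, y, ?_, rfl⟩
        rw [Function.update_self]
        exact Finset.mem_insert_of_mem hy
      · refine Or.inr ⟨j, y, ?_, rfl⟩
        rw [Function.update_of_ne hj]
        exact hy

lemma rank_update_le (V : Matrix (Fin k) (Fin n) F) (A : Fin ℓ → Finset (Fin n))
    (i : Fin ℓ) (x : Fin n) :
    (Gmat V (Function.update A i (insert x (A i)))).rank ≤ (Gmat V A).rank + 1 := by
  rw [rank_eq, rank_eq, colSet_update, span_insert]
  refine le_trans (Submodule.finrank_add_le_finrank_add_finrank _ _) ?_
  have h1 : finrank F (F ∙ wCol V i x) ≤ 1 := by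
    by_cases hv : wCol V i x = (0 : Fin ℓ × Fin k → F)
    · rw [hv, span_zero_singleton, finrank_bot]
      omega
    · rw [finrank_span_singleton hv]
  omega

lemma mem_span_of_rank_update_le (V : Matrix (Fin k) (Fin n) F) (A : Fin ℓ → Finset (Fin n))
    (i : Fin ℓ) (x : Fin n)
    (h : (Gmat V (Function.update A i (insert x (A i)))).rank ≤ (Gmat V A).rank) :
    wCol V i x ∈ span F (colSet V A) := by
  by_contra hv
  rw [rank_eq, rank_eq, colSet_update] at h
  have hlt : span F (colSet V A) < span F (insert (wCol V i x) (colSet V A)) := by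
    refine lt_of_le_of_ne (span_mono (Set.subset_insert _ _)) ?_
    intro heq
    exact hv (heq ▸ subset_span (Set.mem_insert _ _))
  exact absurd (Submodule.finrank_lt_finrank_of_lt hlt) (by omega)

/-- A matrix whose `Gmat` with all sets full has full row rank. -/
def V0 (F : Type) [Field F] (k n : ℕ) : Matrix (Fin k) (Fin n) F :=
  fun i j => if (j : ℕ) = (i : ℕ) then 1 else 0

lemma rank_submatrix_id_le {m m' n' : Type} [Fintype m] [Fintype m'] [Fintype n']
    [DecidableEq m] (M : Matrix m n' F) (g : m' → n') :
    (M.submatrix id g).rank ≤ M.rank := by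
  rw [rank_eq_finrank_span_cols, rank_eq_finrank_span_cols]
  refine Submodule.finrank_mono (span_mono ?_)
  rintro v ⟨c, rfl⟩
  exact ⟨g c, rfl⟩

lemma rank_Gmat_V0 (hk : k ≤ n) :
    (Gmat (V0 F k n) (fun _ : Fin ℓ => (Finset.univ : Finset (Fin n)))).rank = ℓ * k := by
  set A : Fin ℓ → Finset (Fin n) := fun _ => Finset.univ with hA
  apply le_antisymm
  · refine le_trans (Matrix.rank_le_card_height _) ?_
    simp [Fintype.card_prod]
  · set g : Fin ℓ × Fin k → (Fin k ⊕ (Σ i : Fin ℓ, {x // x ∈ A i})) :=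
      fun q => Sum.inr ⟨q.1, ⟨Fin.castLE hk q.2, Finset.mem_univ _⟩⟩ with hg
    have hsub : (Gmat (V0 F k n) A).submatrix id g = (1 : Matrix (Fin ℓ × Fin k) (Fin ℓ × Fin k) F) := by
      ext p q
      simp only [Matrix.submatrix_apply, id_eq, hg, Gmat, Matrix.of_apply, V0,
        Fin.coe_castLE, Matrix.one_apply, Prod.ext_iff]
      rcases p with ⟨p1, p2⟩
      rcases q with ⟨q1, q2⟩
      by_cases h1 : p1 = q1 <;> by_cases h2 : p2 = q2 <;>
        simp [h1, h2, Fin.val_eq_val, eq_comm]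
    have h1 : ((Gmat (V0 F k n) A).submatrix id g).rank = ℓ * k := by
      rw [hsub, Matrix.rank_one]
      simp [Fintype.card_prod]
    calc ℓ * k = ((Gmat (V0 F k n) A).submatrix id g).rank := h1.symm
      _ ≤ (Gmat (V0 F k n) A).rank := rank_submatrix_id_le _ _

end GmatAux

open GmatAux Submodule Module

/-- Let `W` be a generic `k × n` matrix, formalized as maximizing `rank 𝒢_{A_1,…,A_ℓ}[·]`
over all `k × n` matrices for every family of sets. If `𝒢_{A_1,…,A_ℓ}[V]` has full row rank
`ℓk` whenever `𝒢_{A_1,…,A_ℓ}[W]` does, then `rank 𝒢_{A_1,…,A_ℓ}[V] = rank 𝒢_{A_1,…,A_ℓ}[W]`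
for all `A_1,…,A_ℓ ⊆ [n]`. -/
theorem rank_eq_of_full_row_rank_transfer {F : Type} [Field F] {k n ℓ : ℕ} (hk : k ≤ n)
    (V W : Matrix (Fin k) (Fin n) F)
    (hgen : ∀ (A : Fin ℓ → Finset (Fin n)) (V' : Matrix (Fin k) (Fin n) F),
      (Gmat V' A).rank ≤ (Gmat W A).rank)
    (hfull : ∀ A : Fin ℓ → Finset (Fin n),
      (Gmat W A).rank = ℓ * k → (Gmat V A).rank = ℓ * k) :
    ∀ A : Fin ℓ → Finset (Fin n), (Gmat V A).rank = (Gmat W A).rank := by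
  -- `Gmat W` of the full family has full row rank `ℓ * k`.
  have hWuniv : (Gmat W (fun _ : Fin ℓ => (Finset.univ : Finset (Fin n)))).rank = ℓ * k := by
    apply le_antisymm
    · refine le_trans (Matrix.rank_le_card_height _) ?_
      simp [Fintype.card_prod]
    · calc ℓ * k = (Gmat (V0 F k n) (fun _ : Fin ℓ => (Finset.univ : Finset (Fin n)))).rank :=
            (rank_Gmat_V0 hk).symm
        _ ≤ _ := hgen _ _
  -- If no single-element enlargement increases the rank of `Gmat W A`, then `Gmat W A`
  -- already has full row rank.
  have hsat : ∀ A : Fin ℓ → Finset (Fin n),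
      (∀ (i : Fin ℓ) (x : Fin n), x ∉ A i →
        (Gmat W (Function.update A i (insert x (A i)))).rank ≤ (Gmat W A).rank) →
      (Gmat W A).rank = ℓ * k := by
    intro A hA
    have hspan : span F (colSet W (fun _ : Fin ℓ => (Finset.univ : Finset (Fin n)))) ≤
        span F (colSet W A) := by
      rw [span_le]
      rintro v (hv | hv)
      · exact subset_span (Or.inl hv)
      · obtain ⟨i, hi⟩ := Set.mem_iUnion.1 hv
        obtain ⟨x, _, rfl⟩ := hi
        by_cases hx : x ∈ A i
        · exact subset_span (Or.inr (Set.mem_iUnion.2 ⟨i, ⟨x, hx, rfl⟩⟩))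
        · exact mem_span_of_rank_update_le W A i x (hA i x hx)
    have h1 : (Gmat W (fun _ : Fin ℓ => (Finset.univ : Finset (Fin n)))).rank ≤
        (Gmat W A).rank := by
      rw [rank_eq, rank_eq]
      exact Submodule.finrank_mono hspan
    have h2 : (Gmat W A).rank ≤ ℓ * k := by
      refine le_trans (Matrix.rank_le_card_height _) ?_
      simp [Fintype.card_prod]
    omega
  -- Main induction on the total number of missing elements.
  suffices H : ∀ (N : ℕ) (A : Fin ℓ → Finset (Fin n)),
      (∑ i, (n - (A i).card)) ≤ N → (Gmat V A).rank = (Gmat W A).rank by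
    intro A
    exact H _ A le_rfl
  intro N
  induction N with
  | zero =>
    intro A hm
    by_cases hA : ∀ (i : Fin ℓ) (x : Fin n), x ∉ A i →
        (Gmat W (Function.update A i (insert x (A i)))).rank ≤ (Gmat W A).rank
    · rw [hsat A hA, hfull A (hsat A hA)]
    · push_neg at hA
      obtain ⟨i, x, hx, _⟩ := hA
      exfalso
      have hc : (A i).card < n := by
        have : A i ⊂ Finset.univ := Finset.ssubset_univ_iff.2 fun h => hx (h ▸ Finset.mem_univ x)
        have := Finset.card_lt_card this
        simpa using this
      have h1 : 1 ≤ n - (A i).card := by omega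
      have h2 : n - (A i).card ≤ ∑ j, (n - (A j).card) :=
        Finset.single_le_sum (f := fun j => n - (A j).card) (fun j _ => Nat.zero_le _) (Finset.mem_univ i)
      omega
  | succ N ih =>
    intro A hm
    by_cases hA : ∀ (i : Fin ℓ) (x : Fin n), x ∉ A i →
        (Gmat W (Function.update A i (insert x (A i)))).rank ≤ (Gmat W A).rank
    · rw [hsat A hA, hfull A (hsat A hA)]
    · push_neg at hA
      obtain ⟨i, x, hx, hlt⟩ := hA
      set B : Fin ℓ → Finset (Fin n) := Function.update A i (insert x (A i)) with hB
      have hc : (A i).card < n := by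
        have : A i ⊂ Finset.univ := Finset.ssubset_univ_iff.2 fun h => hx (h ▸ Finset.mem_univ x)
        have := Finset.card_lt_card this
        simpa using this
      -- the measure of `B` is one less than that of `A`
      have hmB : (∑ j, (n - (B j).card)) + 1 = ∑ j, (n - (A j).card) := by
        have hfun : (fun j => n - (B j).card) =
            Function.update (fun j => n - (A j).card) i (n - ((A i).card + 1)) := by
          funext j
          by_cases hj : j = i
          · subst hj
            simp [hB, Finset.card_insert_of_notMem hx]
          · simp [hB, Function.update_of_ne hj]
        rw [hfun, Finset.sum_update_of_mem (Finset.mem_univ i)]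
        have := Finset.sum_eq_sum_sdiff_singleton_add (Finset.mem_univ i)
          (fun j => n - (A j).card)
        rw [this]
        omega
      have hIH : (Gmat V B).rank = (Gmat W B).rank := ih B (by omega)
      have h1 : (Gmat W A).rank + 1 ≤ (Gmat W B).rank := hlt
      have h2 : (Gmat V B).rank ≤ (Gmat V A).rank + 1 := rank_update_le V A i x
      have h3 : (Gmat V A).rank ≤ (Gmat W A).rank := hgen A V
      omega
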